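/- arXiv:2504.18597 — 2 statements merged into one kernel-verified Lean document; each statement's English description precedes it below -/
import Mathlib

section
/- (Variance of a fresh BGV encryption noise.) Let n ≥ 1 be an integer, t > 0 a real number, and V_u, V_s, V_e > 0. Let m, u, s, e, e_0, e_1 be mutually independent random polynomials in R_n, each with independent identically distributed mean-zero coefficients, of variance t²/12 for m, V_u for u, V_s for s, and V_e for each of e, e_0, e_1. Then the fresh noise ν_clean = m + t·(e·u + e_1·s + e_0), computed in R_n, satisfies, for every 0 ≤ i ≤ n−1, Var(ν_clean|_i) = t² · ( 1/12 + n·V_e·V_u + V_e + n·V_e·V_s ). -/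
open MeasureTheory ProbabilityTheory Polynomial
open scoped NNReal ENNReal

/-- The polynomial in `ℝ[x]` of degree `< n` with coefficients `c 0, …, c (n-1)`;
it is the canonical representative of an element of `R_n = ℝ[x]/(x^n+1)`. -/
noncomputable def polyOf (n : ℕ) (c : Fin n → ℝ) : Polynomial ℝ :=
  ∑ j : Fin n, Polynomial.C (c j) * Polynomial.X ^ (j : ℕ)

/-- The `i`-th coefficient of the unique representative of degree `< n` of
`p mod (x^n + 1)`, i.e. the `i`-th coefficient of the image of `p` in `R_n`. -/
noncomputable def redCoeff (n : ℕ) (p : Polynomial ℝ) (i : ℕ) : ℝ :=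
  (p %ₘ (Polynomial.X ^ n + 1)).coeff i


lemma sumC_coeff (n : ℕ) (c : Fin n → ℝ) (k : ℕ) :
    (∑ j : Fin n, Polynomial.C (c j) * Polynomial.X ^ (j : ℕ)).coeff k
      = if h : k < n then c ⟨k, h⟩ else 0 := by
  classical
  rw [Polynomial.finset_sum_coeff]
  simp only [Polynomial.coeff_C_mul, Polynomial.coeff_X_pow]
  split_ifs with h
  · rw [Finset.sum_eq_single (⟨k, h⟩ : Fin n)]
    · simp
    · intro j _ hj
      have : k ≠ (j : ℕ) := fun hh => hj (Fin.ext hh.symm)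
      simp [this]
    · simp
  · exact Finset.sum_eq_zero fun j _ => by
      have : k ≠ (j : ℕ) := by omega
      simp [this]

lemma sumC_natDegree_le (n : ℕ) (c : Fin n → ℝ) :
    (∑ j : Fin n, Polynomial.C (c j) * Polynomial.X ^ (j : ℕ)).natDegree ≤ n - 1 := by
  apply Polynomial.natDegree_sum_le_of_forall_le
  intro j _
  refine (Polynomial.natDegree_mul_le).trans ?_
  simp only [Polynomial.natDegree_C, Polynomial.natDegree_pow, Polynomial.natDegree_X]
  have := j.isLt
  omega

lemma redCoeff_eq (n : ℕ) (hn : 1 ≤ n) (p : Polynomial ℝ) (hp : p.natDegree < 2 * n)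
    (i : ℕ) (hi : i < n) :
    (p %ₘ (Polynomial.X ^ n + 1)).coeff i = p.coeff i - p.coeff (n + i) := by
  classical
  set g : Polynomial ℝ := ∑ j : Fin n, Polynomial.C (p.coeff (n + j)) * Polynomial.X ^ (j : ℕ)
    with hg
  set r : Polynomial ℝ :=
    ∑ j : Fin n, Polynomial.C (p.coeff (j : ℕ) - p.coeff (n + j)) * Polynomial.X ^ (j : ℕ)
    with hr
  have hq : (Polynomial.X ^ n + 1 : Polynomial ℝ).Monic := by
    have h1 : (1 : Polynomial ℝ) = Polynomial.C 1 := by simp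
    rw [h1]
    exact Polynomial.monic_X_pow_add_C _ (by omega)
  have hpr : p - r = g * Polynomial.X ^ n + g := by
    ext k
    simp only [Polynomial.coeff_sub, Polynomial.coeff_add, Polynomial.coeff_mul_X_pow', hr, hg,
      sumC_coeff]
    rcases lt_or_ge k n with h1 | h1
    · have h2 : ¬ n ≤ k := by omega
      simp [h1, h2]
    · have h2 : ¬ k < n := by omega
      rcases lt_or_ge k (2 * n) with h3 | h3
      · have h4 : k - n < n := by omega
        have h5 : n + (k - n) = k := by omega
        simp [h2, h1, h4, h5]
      · have h4 : ¬ k - n < n := by omega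
        have h5 : p.coeff k = 0 := Polynomial.coeff_eq_zero_of_natDegree_lt (by omega)
        simp [h2, h1, h4, h5]
  have hdvd : (Polynomial.X ^ n + 1) ∣ p - r := by
    refine ⟨g, ?_⟩
    rw [hpr]; ring
  have h1 : p %ₘ (Polynomial.X ^ n + 1) = r %ₘ (Polynomial.X ^ n + 1) :=
    Polynomial.modByMonic_eq_of_dvd_sub hq hdvd
  have hdeg : r.degree < (Polynomial.X ^ n + 1 : Polynomial ℝ).degree := by
    have h2 : (Polynomial.X ^ n + 1 : Polynomial ℝ).degree = n := by
      have h1' : (1 : Polynomial ℝ) = Polynomial.C 1 := by simp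
      rw [h1']
      exact Polynomial.degree_X_pow_add_C (by omega) 1
    rw [h2, Polynomial.degree_lt_iff_coeff_zero]
    intro k hk
    have hk0 : n ≤ k := by exact_mod_cast hk
    have hk' : ¬ k < n := by omega
    rw [hr, sumC_coeff]
    simp [hk']
  have h2 : r %ₘ (Polynomial.X ^ n + 1) = r := (Polynomial.modByMonic_eq_self_iff hq).2 hdeg
  rw [h1, h2, hr, sumC_coeff]
  simp [hi]

lemma fin_sub_val {n : ℕ} [NeZero n] (i a : Fin n) :
    ((i - a : Fin n) : ℕ) = if (a : ℕ) ≤ (i : ℕ) then (i : ℕ) - (a : ℕ) else n + (i : ℕ) - (a : ℕ) := by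
  have ha := a.isLt
  have hi := i.isLt
  rw [Fin.sub_def]
  show ((n - (a : ℕ)) + (i : ℕ)) % n = _
  split_ifs with h
  · have h2 : (n - (a : ℕ)) + (i : ℕ) = n + ((i : ℕ) - (a : ℕ)) := by omega
    rw [h2, Nat.add_mod_left, Nat.mod_eq_of_lt (by omega)]
  · rw [Nat.mod_eq_of_lt (by omega)]
    omega


lemma prod_coeff_sub (n : ℕ) [NeZero n] (c d : Fin n → ℝ) (i : Fin n) :
    (polyOf n c * polyOf n d).coeff (i : ℕ) - (polyOf n c * polyOf n d).coeff (n + (i : ℕ))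
      = ∑ a : Fin n, (if (a : ℕ) ≤ (i : ℕ) then (1 : ℝ) else -1) * (c a * d (i - a)) := by
  classical
  have hn : 0 < n := Nat.pos_of_ne_zero (NeZero.ne n)
  have hi := i.isLt
  have pc : ∀ k : ℕ, (polyOf n c).coeff k = if h : k < n then c ⟨k, h⟩ else 0 :=
    fun k => sumC_coeff n c k
  have pd : ∀ k : ℕ, (polyOf n d).coeff k = if h : k < n then d ⟨k, h⟩ else 0 :=
    fun k => sumC_coeff n d k
  have h1 : (polyOf n c * polyOf n d).coeff (i : ℕ)
      = ∑ a : Fin n, (if (a : ℕ) ≤ (i : ℕ) then c a * d (i - a) else 0) := by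
    rw [Polynomial.coeff_mul, Finset.Nat.sum_antidiagonal_eq_sum_range_succ_mk]
    have step1 : ∑ k ∈ Finset.range ((i : ℕ) + 1),
        (polyOf n c).coeff k * (polyOf n d).coeff ((i : ℕ) - k)
        = ∑ k ∈ Finset.range n, (if k ≤ (i : ℕ) then
            (polyOf n c).coeff k * (polyOf n d).coeff ((i : ℕ) - k) else 0) := by
      rw [← Finset.sum_filter]
      apply Finset.sum_congr
      · ext k
        simp only [Finset.mem_range, Finset.mem_filter]
        omega
      · intro k _; rfl
    rw [Nat.succ_eq_add_one, step1, ← Fin.sum_univ_eq_sum_range]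
    apply Finset.sum_congr rfl
    intro a _
    have ha := a.isLt
    split_ifs with h
    · have hlt : (i : ℕ) - (a : ℕ) < n := by omega
      have hval : ((i - a : Fin n) : ℕ) = (i : ℕ) - (a : ℕ) := by
        rw [fin_sub_val]; simp [h]
      have hd : d (i - a) = d ⟨(i : ℕ) - (a : ℕ), hlt⟩ := by
        congr 1; exact Fin.ext hval
      rw [pc, pd, dif_pos ha, dif_pos hlt, hd]
    · rfl
  have h2 : (polyOf n c * polyOf n d).coeff (n + (i : ℕ))
      = ∑ a : Fin n, (if (a : ℕ) ≤ (i : ℕ) then 0 else c a * d (i - a)) := by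
    rw [Polynomial.coeff_mul, Finset.Nat.sum_antidiagonal_eq_sum_range_succ_mk]
    have step1 : ∑ k ∈ Finset.range n,
        (polyOf n c).coeff k * (polyOf n d).coeff (n + (i : ℕ) - k)
        = ∑ k ∈ Finset.range (n + (i : ℕ) + 1),
            (polyOf n c).coeff k * (polyOf n d).coeff (n + (i : ℕ) - k) := by
      apply Finset.sum_subset (Finset.range_subset_range.2 (by omega))
      intro k _ hk
      have hk' : ¬ k < n := by simp only [Finset.mem_range] at hk; omega
      rw [pc, dif_neg hk', zero_mul]
    rw [Nat.succ_eq_add_one, ← step1, ← Fin.sum_univ_eq_sum_range]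
    apply Finset.sum_congr rfl
    intro a _
    have ha := a.isLt
    split_ifs with h
    · have hge : ¬ (n + (i : ℕ) - (a : ℕ)) < n := by omega
      rw [pd, dif_neg hge, mul_zero]
    · have hlt : n + (i : ℕ) - (a : ℕ) < n := by omega
      have hval : ((i - a : Fin n) : ℕ) = n + (i : ℕ) - (a : ℕ) := by
        rw [fin_sub_val]; simp [h]
      have hd : d (i - a) = d ⟨n + (i : ℕ) - (a : ℕ), hlt⟩ := by
        congr 1; exact Fin.ext hval
      rw [pc, pd, dif_pos ha, dif_pos hlt, hd]
  rw [h1, h2, ← Finset.sum_sub_distrib]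
  apply Finset.sum_congr rfl
  intro a _
  split_ifs <;> ring

lemma polyOf_coeff (n : ℕ) (c : Fin n → ℝ) (k : ℕ) :
    (polyOf n c).coeff k = if h : k < n then c ⟨k, h⟩ else 0 :=
  sumC_coeff n c k

lemma polyOf_natDegree_le (n : ℕ) (c : Fin n → ℝ) : (polyOf n c).natDegree ≤ n - 1 :=
  sumC_natDegree_le n c

lemma nu_eq (n : ℕ) [NeZero n] (t : ℝ) (cm ce cu ce1 cs ce0 : Fin n → ℝ) (i : Fin n) :
    redCoeff n (polyOf n cm + Polynomial.C t *
        (polyOf n ce * polyOf n cu + polyOf n ce1 * polyOf n cs + polyOf n ce0)) (i : ℕ)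
      = cm i + (t * (∑ a : Fin n, (if (a : ℕ) ≤ (i : ℕ) then (1 : ℝ) else -1) * (ce a * cu (i - a)))
          + (t * (∑ a : Fin n, (if (a : ℕ) ≤ (i : ℕ) then (1 : ℝ) else -1) * (ce1 a * cs (i - a)))
          + t * ce0 i)) := by
  have hn : 1 ≤ n := Nat.one_le_iff_ne_zero.2 (NeZero.ne n)
  have hi := i.isLt
  set p := polyOf n cm + Polynomial.C t *
      (polyOf n ce * polyOf n cu + polyOf n ce1 * polyOf n cs + polyOf n ce0) with hp
  have hdeg : p.natDegree < 2 * n := by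
    have d0 : ∀ c' : Fin n → ℝ, (polyOf n c').natDegree ≤ n - 1 := polyOf_natDegree_le n
    have d1 : (polyOf n ce * polyOf n cu).natDegree ≤ (n - 1) + (n - 1) :=
      Polynomial.natDegree_mul_le.trans (add_le_add (d0 ce) (d0 cu))
    have d2 : (polyOf n ce1 * polyOf n cs).natDegree ≤ (n - 1) + (n - 1) :=
      Polynomial.natDegree_mul_le.trans (add_le_add (d0 ce1) (d0 cs))
    have d3 : (polyOf n ce * polyOf n cu + polyOf n ce1 * polyOf n cs
        + polyOf n ce0).natDegree ≤ (n - 1) + (n - 1) :=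
      Polynomial.natDegree_add_le_of_degree_le
        (Polynomial.natDegree_add_le_of_degree_le d1 d2) ((d0 ce0).trans (by omega))
    have d4 : (Polynomial.C t * (polyOf n ce * polyOf n cu + polyOf n ce1 * polyOf n cs
        + polyOf n ce0)).natDegree ≤ (n - 1) + (n - 1) :=
      Polynomial.natDegree_mul_le.trans (by simpa using d3)
    have d5 : p.natDegree ≤ (n - 1) + (n - 1) :=
      Polynomial.natDegree_add_le_of_degree_le ((d0 cm).trans (by omega)) d4
    omega
  unfold redCoeff
  rw [redCoeff_eq n hn p hdeg (i : ℕ) hi]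
  have e1 := prod_coeff_sub n ce cu i
  have e2 := prod_coeff_sub n ce1 cs i
  have hni : ¬ (n + (i : ℕ) < n) := by omega
  have hcm : (polyOf n cm).coeff (i : ℕ) = cm i := by
    rw [polyOf_coeff, dif_pos hi]
  have hcm' : (polyOf n cm).coeff (n + (i : ℕ)) = 0 := by
    rw [polyOf_coeff, dif_neg hni]
  have hce0 : (polyOf n ce0).coeff (i : ℕ) = ce0 i := by
    rw [polyOf_coeff, dif_pos hi]
  have hce0' : (polyOf n ce0).coeff (n + (i : ℕ)) = 0 := by
    rw [polyOf_coeff, dif_neg hni]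
  rw [hp]
  simp only [Polynomial.coeff_add, Polynomial.coeff_C_mul, hcm, hcm', hce0, hce0']
  linear_combination t * e1 + t * e2


lemma l2_mul_integrable {Ω : Type*} [MeasurableSpace Ω] {P : Measure Ω}
    {f g : Ω → ℝ} (hf : MemLp f 2 P) (hg : MemLp g 2 P) :
    Integrable (fun ω => f ω * g ω) P := by
  rw [← memLp_one_iff_integrable]
  have h := MemLp.smul (𝕜 := ℝ) (p := 2) (q := 2) (r := 1) hg hf (hpqr := ?_)
  · exact h
  · exact ⟨by rw [inv_one, ENNReal.inv_two_add_inv_two]⟩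

lemma second_moment {Ω : Type*} [MeasurableSpace Ω] {P : Measure Ω} [IsProbabilityMeasure P]
    {f : Ω → ℝ} (hf : MemLp f 2 P) (h0 : ∫ ω, f ω ∂P = 0) :
    ∫ ω, f ω * f ω ∂P = variance f P := by
  have h2 : (fun ω => f ω * f ω) = fun ω => f ω ^ 2 := by funext ω; ring
  rw [variance_eq_sub hf]
  simp only [Pi.pow_apply]
  rw [h0, h2]
  ring

lemma aux_block {Ω : Type*} [MeasurableSpace Ω] (P : Measure Ω) [IsProbabilityMeasure P]
    {n : ℕ} (X Y : Fin n → Ω → ℝ)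
    (hXm : ∀ j, Measurable (X j)) (hYm : ∀ j, Measurable (Y j))
    (hXY : IndepFun (fun ω (j : Fin n) => X j ω) (fun ω (j : Fin n) => Y j ω) P)
    (hXi : iIndepFun X P)
    (hX2 : ∀ j, MemLp (X j) 2 P) (hY2 : ∀ j, MemLp (Y j) 2 P)
    (hX0 : ∀ j, ∫ ω, X j ω ∂P = 0) (hY0 : ∀ j, ∫ ω, Y j ω ∂P = 0)
    {VX VY : ℝ} (hVX : ∀ j, variance (X j) P = VX) (hVY : ∀ j, variance (Y j) P = VY)
    (ε : Fin n → ℝ) (hε : ∀ a, ε a = 1 ∨ ε a = -1) (b : Fin n → Fin n) :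
    MemLp (fun ω => ∑ a : Fin n, ε a * (X a ω * Y (b a) ω)) 2 P ∧
    (∫ ω, (∑ a : Fin n, ε a * (X a ω * Y (b a) ω)) ∂P) = 0 ∧
    variance (fun ω => ∑ a : Fin n, ε a * (X a ω * Y (b a) ω)) P = n * VX * VY := by
  classical
  have hInd1 : ∀ (a c : Fin n), IndepFun (X a) (Y c) P := fun a c =>
    hXY.comp (measurable_pi_apply a) (measurable_pi_apply c)
  have hInd2 : ∀ (a a' c c' : Fin n),
      IndepFun (fun ω => X a ω * X a' ω) (fun ω => Y c ω * Y c' ω) P := fun a a' c c' =>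
    hXY.comp ((measurable_pi_apply a).mul (measurable_pi_apply a'))
      ((measurable_pi_apply c).mul (measurable_pi_apply c'))
  have hmul2 : ∀ a c, MemLp (fun ω => X a ω * Y c ω) 2 P := by
    intro a c
    rw [memLp_two_iff_integrable_sq (f := fun ω => X a ω * Y c ω) (((hXm a).mul (hYm c)).aestronglyMeasurable)]
    have hsq : (fun ω => (X a ω * Y c ω) ^ 2) = fun ω => (X a ω) ^ 2 * (Y c ω) ^ 2 := by
      funext ω; ring
    rw [hsq]
    have hindsq : IndepFun (fun ω => (X a ω) ^ 2) (fun ω => (Y c ω) ^ 2) P :=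
      (hInd1 a c).comp (measurable_id.pow_const 2) (measurable_id.pow_const 2)
    exact hindsq.integrable_mul (hX2 a).integrable_sq (hY2 c).integrable_sq
  have hint0 : ∀ a c, ∫ ω, X a ω * Y c ω ∂P = 0 := by
    intro a c
    have h : ∫ ω, X a ω * Y c ω ∂P = (∫ ω, X a ω ∂P) * ∫ ω, Y c ω ∂P :=
      (hInd1 a c).integral_fun_mul_eq_mul_integral (hXm a).aestronglyMeasurable (hYm c).aestronglyMeasurable
    rw [h, hX0 a, zero_mul]
  have key : ∀ a a' : Fin n,
      ∫ ω, (ε a * (X a ω * Y (b a) ω)) * (ε a' * (X a' ω * Y (b a') ω)) ∂P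
        = if a = a' then VX * VY else 0 := by
    intro a a'
    have hre : (fun ω => (ε a * (X a ω * Y (b a) ω)) * (ε a' * (X a' ω * Y (b a') ω)))
        = fun ω => (ε a * ε a') * ((X a ω * X a' ω) * (Y (b a) ω * Y (b a') ω)) := by
      funext ω; ring
    rw [hre, integral_const_mul]
    have hfac : ∫ ω, (X a ω * X a' ω) * (Y (b a) ω * Y (b a') ω) ∂P
        = (∫ ω, X a ω * X a' ω ∂P) * ∫ ω, Y (b a) ω * Y (b a') ω ∂P :=
      (hInd2 a a' (b a) (b a')).integral_fun_mul_eq_mul_integral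
        (((hXm a).mul (hXm a')).aestronglyMeasurable)
        (((hYm (b a)).mul (hYm (b a'))).aestronglyMeasurable)
    rw [hfac]
    by_cases h : a = a'
    · subst h
      rw [if_pos rfl]
      have hx := second_moment (hX2 a) (hX0 a)
      have hy := second_moment (hY2 (b a)) (hY0 (b a))
      have hε2 : ε a * ε a = 1 := by rcases hε a with h | h <;> rw [h] <;> norm_num
      rw [hx, hy, hVX, hVY, hε2, one_mul]
    · have hxx : ∫ ω, X a ω * X a' ω ∂P = 0 := by
        have h2 : ∫ ω, X a ω * X a' ω ∂P = (∫ ω, X a ω ∂P) * ∫ ω, X a' ω ∂P :=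
          (hXi.indepFun h).integral_fun_mul_eq_mul_integral (hXm a).aestronglyMeasurable
            (hXm a').aestronglyMeasurable
        rw [h2, hX0 a, zero_mul]
      rw [if_neg h, hxx, zero_mul, mul_zero]
  have hsum2 : MemLp (fun ω => ∑ a : Fin n, ε a * (X a ω * Y (b a) ω)) 2 P := by
    exact memLp_finset_sum (μ := P) (p := 2) Finset.univ
      (f := fun (a : Fin n) => fun ω => ε a * (X a ω * Y (b a) ω))
      (fun a _ => (hmul2 a (b a)).const_mul (ε a))
  have hint1 : ∀ a : Fin n, Integrable (fun ω => ε a * (X a ω * Y (b a) ω)) P :=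
    fun a => (l2_mul_integrable (hX2 a) (hY2 (b a))).const_mul (ε a)
  have hmean : ∫ ω, (∑ a : Fin n, ε a * (X a ω * Y (b a) ω)) ∂P = 0 := by
    rw [integral_finset_sum _ (fun a _ => hint1 a)]
    apply Finset.sum_eq_zero
    intro a _
    rw [integral_const_mul, hint0 a (b a), mul_zero]
  refine ⟨hsum2, hmean, ?_⟩
  have hint4 : ∀ a a' : Fin n, Integrable
      (fun ω => (ε a * (X a ω * Y (b a) ω)) * (ε a' * (X a' ω * Y (b a') ω))) P :=
    fun a a' => l2_mul_integrable ((hmul2 a (b a)).const_mul (ε a))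
      ((hmul2 a' (b a')).const_mul (ε a'))
  rw [variance_eq_sub hsum2]
  simp only [Pi.pow_apply]
  rw [hmean]
  have hsq : (fun ω => (∑ a : Fin n, ε a * (X a ω * Y (b a) ω)) ^ 2)
      = fun ω => ∑ a : Fin n, ∑ a' : Fin n,
          (ε a * (X a ω * Y (b a) ω)) * (ε a' * (X a' ω * Y (b a') ω)) := by
    funext ω
    rw [sq, Finset.sum_mul_sum]
  rw [hsq]
  rw [integral_finset_sum _ (fun a _ => integrable_finset_sum _ (fun a' _ => hint4 a a'))]
  have : ∀ a : Fin n, (∫ ω, (∑ a' : Fin n,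
      (ε a * (X a ω * Y (b a) ω)) * (ε a' * (X a' ω * Y (b a') ω))) ∂P) = VX * VY := by
    intro a
    rw [integral_finset_sum _ (fun a' _ => hint4 a a')]
    have h2 : ∀ a' : Fin n, a' ∈ Finset.univ →
        (∫ ω, (ε a * (X a ω * Y (b a) ω)) * (ε a' * (X a' ω * Y (b a') ω)) ∂P)
          = if a = a' then VX * VY else 0 := fun a' _ => key a a'
    rw [Finset.sum_congr rfl h2, Finset.sum_ite_eq Finset.univ a fun _ => VX * VY]
    simp
  rw [Finset.sum_congr rfl (fun a _ => this a)]
  simp [Finset.sum_const, mul_assoc]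

set_option maxHeartbeats 1000000

/-- **variance of a fresh BGV encryption noise.** With `m, u, s, e, e₀, e₁`
mutually independent random polynomials in `R_n` having i.i.d. mean-zero coefficients of
variances `t²/12, V_u, V_s, V_e, V_e, V_e`, the fresh noise
`ν_clean = m + t(e·u + e₁·s + e₀)` satisfies
`Var(ν_clean|_i) = t²(1/12 + n V_e V_u + V_e + n V_e V_s)`. -/
theorem stmt11 {Ω : Type*} [MeasurableSpace Ω] (P : Measure Ω) [IsProbabilityMeasure P]
    (n : ℕ) (hn : 1 ≤ n) (t : ℝ) (ht : 0 < t)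
    (Vu Vs Ve : ℝ) (hVu : 0 < Vu) (hVs : 0 < Vs) (hVe : 0 < Ve)
    (m u s e e₀ e₁ : Fin n → Ω → ℝ)
    (hmeas : ∀ f ∈ [m, u, s, e, e₀, e₁], ∀ j, Measurable (f j))
    -- the six random polynomials are mutually independent
    (hindep : iIndepFun
      (![fun ω (j : Fin n) => m j ω, fun ω j => u j ω, fun ω j => s j ω,
         fun ω j => e j ω, fun ω j => e₀ j ω, fun ω j => e₁ j ω] :
        Fin 6 → Ω → Fin n → ℝ) P)
    -- each has independent identically distributed mean-zero square-integrable
    -- coefficients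
    (hiid : ∀ f ∈ [m, u, s, e, e₀, e₁],
      iIndepFun f P ∧
      (∀ j j', Measure.map (f j) P = Measure.map (f j') P) ∧
      (∀ j, (∫ ω, f j ω ∂P) = 0) ∧ (∀ j, MemLp (f j) 2 P))
    -- prescribed coefficient variances
    (hmvar : ∀ j, variance (m j) P = t ^ 2 / 12)
    (huvar : ∀ j, variance (u j) P = Vu)
    (hsvar : ∀ j, variance (s j) P = Vs)
    (hevar : ∀ j, variance (e j) P = Ve)
    (he₀var : ∀ j, variance (e₀ j) P = Ve)
    (he₁var : ∀ j, variance (e₁ j) P = Ve)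
    (i : Fin n) :
    variance (fun ω => redCoeff n
        (polyOf n (fun j => m j ω) + Polynomial.C t *
          (polyOf n (fun j => e j ω) * polyOf n (fun j => u j ω)
            + polyOf n (fun j => e₁ j ω) * polyOf n (fun j => s j ω)
            + polyOf n (fun j => e₀ j ω))) i) P
      = t ^ 2 * (1 / 12 + n * Ve * Vu + Ve + n * Ve * Vs) := by
  classical
  haveI : NeZero n := ⟨by omega⟩
  -- extract per-family facts
  have hm_mem : m ∈ [m, u, s, e, e₀, e₁] := by simp
  have hu_mem : u ∈ [m, u, s, e, e₀, e₁] := by simp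
  have hs_mem : s ∈ [m, u, s, e, e₀, e₁] := by simp
  have he_mem : e ∈ [m, u, s, e, e₀, e₁] := by simp
  have he₀_mem : e₀ ∈ [m, u, s, e, e₀, e₁] := by simp
  have he₁_mem : e₁ ∈ [m, u, s, e, e₀, e₁] := by simp
  have hm_meas := hmeas m hm_mem
  have hu_meas := hmeas u hu_mem
  have hs_meas := hmeas s hs_mem
  have he_meas := hmeas e he_mem
  have he₀_meas := hmeas e₀ he₀_mem
  have he₁_meas := hmeas e₁ he₁_mem
  have hm_fact := hiid m hm_mem
  have hu_fact := hiid u hu_mem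
  have hs_fact := hiid s hs_mem
  have he_fact := hiid e he_mem
  have he₀_fact := hiid e₀ he₀_mem
  have he₁_fact := hiid e₁ he₁_mem
  -- the sign function
  have hεpm : ∀ a : Fin n, (if (a : ℕ) ≤ (i : ℕ) then (1 : ℝ) else -1) = 1 ∨
      (if (a : ℕ) ≤ (i : ℕ) then (1 : ℝ) else -1) = -1 := by
    intro a
    by_cases h : (a : ℕ) ≤ (i : ℕ)
    · left; rw [if_pos h]
    · right; rw [if_neg h]
  -- pointwise identity
  have hpt : (fun ω => redCoeff n
      (polyOf n (fun j => m j ω) + Polynomial.C t *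
        (polyOf n (fun j => e j ω) * polyOf n (fun j => u j ω)
          + polyOf n (fun j => e₁ j ω) * polyOf n (fun j => s j ω)
          + polyOf n (fun j => e₀ j ω))) (i : ℕ))
      = fun ω => m i ω +
          (t * (∑ a : Fin n, (if (a : ℕ) ≤ (i : ℕ) then (1 : ℝ) else -1) * (e a ω * u (i - a) ω))
            + (t * (∑ a : Fin n, (if (a : ℕ) ≤ (i : ℕ) then (1 : ℝ) else -1)
                * (e₁ a ω * s (i - a) ω))
              + t * e₀ i ω)) := by
    funext ω
    exact nu_eq n t (fun j => m j ω) (fun j => e j ω) (fun j => u j ω) (fun j => e₁ j ω)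
      (fun j => s j ω) (fun j => e₀ j ω) i
  rw [hpt]
  -- measurability of the six vector-valued random variables
  have hFmeas : ∀ k : Fin 6, Measurable
      ((![fun ω (j : Fin n) => m j ω, fun ω j => u j ω, fun ω j => s j ω,
        fun ω j => e j ω, fun ω j => e₀ j ω, fun ω j => e₁ j ω] :
          Fin 6 → Ω → Fin n → ℝ) k) := by
    intro k
    fin_cases k
    · exact measurable_pi_lambda _ fun j => hm_meas j
    · exact measurable_pi_lambda _ fun j => hu_meas j
    · exact measurable_pi_lambda _ fun j => hs_meas j
    · exact measurable_pi_lambda _ fun j => he_meas j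
    · exact measurable_pi_lambda _ fun j => he₀_meas j
    · exact measurable_pi_lambda _ fun j => he₁_meas j
  -- block independence for the two products
  have hEU : IndepFun (fun ω (j : Fin n) => e j ω) (fun ω (j : Fin n) => u j ω) P :=
    hindep.indepFun (by decide : (3 : Fin 6) ≠ 1)
  have hE1S : IndepFun (fun ω (j : Fin n) => e₁ j ω) (fun ω (j : Fin n) => s j ω) P :=
    hindep.indepFun (by decide : (5 : Fin 6) ≠ 2)
  -- the two quadratic blocks
  obtain ⟨hA2, hA0, hAvar⟩ := aux_block P e u he_meas hu_meas hEU he_fact.1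
    he_fact.2.2.2 hu_fact.2.2.2 he_fact.2.2.1 hu_fact.2.2.1 hevar huvar
    (fun a => if (a : ℕ) ≤ (i : ℕ) then (1 : ℝ) else -1) hεpm (fun a => i - a)
  obtain ⟨hB2, hB0, hBvar⟩ := aux_block P e₁ s he₁_meas hs_meas hE1S he₁_fact.1
    he₁_fact.2.2.2 hs_fact.2.2.2 he₁_fact.2.2.1 hs_fact.2.2.1 he₁var hsvar
    (fun a => if (a : ℕ) ≤ (i : ℕ) then (1 : ℝ) else -1) hεpm (fun a => i - a)
  -- MemLp facts
  have htA2 : MemLp (fun ω => t * (∑ a : Fin n,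
      (if (a : ℕ) ≤ (i : ℕ) then (1 : ℝ) else -1) * (e a ω * u (i - a) ω))) 2 P :=
    hA2.const_mul t
  have htB2 : MemLp (fun ω => t * (∑ a : Fin n,
      (if (a : ℕ) ≤ (i : ℕ) then (1 : ℝ) else -1) * (e₁ a ω * s (i - a) ω))) 2 P :=
    hB2.const_mul t
  have htW2 : MemLp (fun ω => t * e₀ i ω) 2 P := (he₀_fact.2.2.2 i).const_mul t
  have hmi2 : MemLp (m i) 2 P := hm_fact.2.2.2 i
  -- pairwise independence of the four chunks
  have I01 : IndepFun (m i) (fun ω => t * (∑ a : Fin n, (if (a : ℕ) ≤ (i : ℕ) then (1 : ℝ) else -1) * (e a ω * u (i - a) ω))) P := by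
    have h := (hindep.indepFun_prodMk hFmeas 3 1 0 (by decide) (by decide)).comp
      (φ := (fun p : (Fin n → ℝ) × (Fin n → ℝ) => t * (∑ a : Fin n, (if (a : ℕ) ≤ (i : ℕ) then (1 : ℝ) else -1) * (p.1 a * p.2 (i - a)))))
      (ψ := fun v : Fin n → ℝ => v i)
      (measurable_const.mul (Finset.measurable_sum _ fun a _ => measurable_const.mul (((measurable_pi_apply a).comp measurable_fst).mul ((measurable_pi_apply (i - a)).comp measurable_snd))))
      (measurable_pi_apply (X := fun _ : Fin n => ℝ) i)
    exact h.symm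
  have I02 : IndepFun (m i) (fun ω => t * (∑ a : Fin n, (if (a : ℕ) ≤ (i : ℕ) then (1 : ℝ) else -1) * (e₁ a ω * s (i - a) ω))) P := by
    have h := (hindep.indepFun_prodMk hFmeas 5 2 0 (by decide) (by decide)).comp
      (φ := (fun p : (Fin n → ℝ) × (Fin n → ℝ) => t * (∑ a : Fin n, (if (a : ℕ) ≤ (i : ℕ) then (1 : ℝ) else -1) * (p.1 a * p.2 (i - a)))))
      (ψ := fun v : Fin n → ℝ => v i)
      (measurable_const.mul (Finset.measurable_sum _ fun a _ => measurable_const.mul (((measurable_pi_apply a).comp measurable_fst).mul ((measurable_pi_apply (i - a)).comp measurable_snd))))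
      (measurable_pi_apply (X := fun _ : Fin n => ℝ) i)
    exact h.symm
  have I03 : IndepFun (m i) (fun ω => t * e₀ i ω) P := by
    have h := (hindep.indepFun (show (0 : Fin 6) ≠ 4 by decide)).comp
      (φ := fun v : Fin n → ℝ => v i)
      (ψ := fun v : Fin n → ℝ => t * v i)
      (measurable_pi_apply (X := fun _ : Fin n => ℝ) i)
      (measurable_const.mul (measurable_pi_apply (X := fun _ : Fin n => ℝ) i))
    exact h
  have I12 : IndepFun (fun ω => t * (∑ a : Fin n, (if (a : ℕ) ≤ (i : ℕ) then (1 : ℝ) else -1) * (e a ω * u (i - a) ω))) (fun ω => t * (∑ a : Fin n, (if (a : ℕ) ≤ (i : ℕ) then (1 : ℝ) else -1) * (e₁ a ω * s (i - a) ω))) P := by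
    have h := (hindep.indepFun_prodMk_prodMk hFmeas 3 1 5 2
        (by decide) (by decide) (by decide) (by decide)).comp
      (φ := (fun p : (Fin n → ℝ) × (Fin n → ℝ) => t * (∑ a : Fin n, (if (a : ℕ) ≤ (i : ℕ) then (1 : ℝ) else -1) * (p.1 a * p.2 (i - a)))))
      (ψ := (fun p : (Fin n → ℝ) × (Fin n → ℝ) => t * (∑ a : Fin n, (if (a : ℕ) ≤ (i : ℕ) then (1 : ℝ) else -1) * (p.1 a * p.2 (i - a)))))
      (measurable_const.mul (Finset.measurable_sum _ fun a _ => measurable_const.mul (((measurable_pi_apply a).comp measurable_fst).mul ((measurable_pi_apply (i - a)).comp measurable_snd))))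
      (measurable_const.mul (Finset.measurable_sum _ fun a _ => measurable_const.mul (((measurable_pi_apply a).comp measurable_fst).mul ((measurable_pi_apply (i - a)).comp measurable_snd))))
    exact h
  have I13 : IndepFun (fun ω => t * (∑ a : Fin n, (if (a : ℕ) ≤ (i : ℕ) then (1 : ℝ) else -1) * (e a ω * u (i - a) ω))) (fun ω => t * e₀ i ω) P := by
    have h := (hindep.indepFun_prodMk hFmeas 3 1 4 (by decide) (by decide)).comp
      (φ := (fun p : (Fin n → ℝ) × (Fin n → ℝ) => t * (∑ a : Fin n, (if (a : ℕ) ≤ (i : ℕ) then (1 : ℝ) else -1) * (p.1 a * p.2 (i - a)))))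
      (ψ := fun v : Fin n → ℝ => t * v i)
      (measurable_const.mul (Finset.measurable_sum _ fun a _ => measurable_const.mul (((measurable_pi_apply a).comp measurable_fst).mul ((measurable_pi_apply (i - a)).comp measurable_snd))))
      (measurable_const.mul (measurable_pi_apply (X := fun _ : Fin n => ℝ) i))
    exact h
  have I23 : IndepFun (fun ω => t * (∑ a : Fin n, (if (a : ℕ) ≤ (i : ℕ) then (1 : ℝ) else -1) * (e₁ a ω * s (i - a) ω))) (fun ω => t * e₀ i ω) P := by
    have h := (hindep.indepFun_prodMk hFmeas 5 2 4 (by decide) (by decide)).comp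
      (φ := (fun p : (Fin n → ℝ) × (Fin n → ℝ) => t * (∑ a : Fin n, (if (a : ℕ) ≤ (i : ℕ) then (1 : ℝ) else -1) * (p.1 a * p.2 (i - a)))))
      (ψ := fun v : Fin n → ℝ => t * v i)
      (measurable_const.mul (Finset.measurable_sum _ fun a _ => measurable_const.mul (((measurable_pi_apply a).comp measurable_fst).mul ((measurable_pi_apply (i - a)).comp measurable_snd))))
      (measurable_const.mul (measurable_pi_apply (X := fun _ : Fin n => ℝ) i))
    exact h
  -- assemble as a sum of four terms
  have hsum : (fun ω => m i ω +
      (t * (∑ a : Fin n, (if (a : ℕ) ≤ (i : ℕ) then (1 : ℝ) else -1) * (e a ω * u (i - a) ω)) + (t * (∑ a : Fin n, (if (a : ℕ) ≤ (i : ℕ) then (1 : ℝ) else -1) * (e₁ a ω * s (i - a) ω)) + t * e₀ i ω)))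
      = ∑ k : Fin 4, ![m i, (fun ω => t * (∑ a : Fin n, (if (a : ℕ) ≤ (i : ℕ) then (1 : ℝ) else -1) * (e a ω * u (i - a) ω))), (fun ω => t * (∑ a : Fin n, (if (a : ℕ) ≤ (i : ℕ) then (1 : ℝ) else -1) * (e₁ a ω * s (i - a) ω))), (fun ω => t * e₀ i ω)] k := by
    funext ω
    rw [Finset.sum_apply, Fin.sum_univ_four]
    simp only [Matrix.cons_val_zero, Matrix.cons_val_one, Matrix.head_cons,
      Matrix.cons_val_two, Matrix.tail_cons, Matrix.cons_val_three]
    ring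
  rw [hsum, IndepFun.variance_sum]
  · rw [Fin.sum_univ_four]
    simp only [Matrix.cons_val_zero, Matrix.cons_val_one, Matrix.head_cons,
      Matrix.cons_val_two, Matrix.tail_cons, Matrix.cons_val_three]
    have vA : variance (fun ω => t * (∑ a : Fin n, (if (a : ℕ) ≤ (i : ℕ) then (1 : ℝ) else -1) * (e a ω * u (i - a) ω))) P = t ^ 2 * variance (fun ω => ∑ a : Fin n, (if (a : ℕ) ≤ (i : ℕ) then (1 : ℝ) else -1) * (e a ω * u (i - a) ω)) P := by
      rw [show (fun ω => t * (∑ a : Fin n, (if (a : ℕ) ≤ (i : ℕ) then (1 : ℝ) else -1) * (e a ω * u (i - a) ω))) = t • (fun ω => ∑ a : Fin n, (if (a : ℕ) ≤ (i : ℕ) then (1 : ℝ) else -1) * (e a ω * u (i - a) ω)) from rfl]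
      exact variance_smul t _ P
    have vB : variance (fun ω => t * (∑ a : Fin n, (if (a : ℕ) ≤ (i : ℕ) then (1 : ℝ) else -1) * (e₁ a ω * s (i - a) ω))) P = t ^ 2 * variance (fun ω => ∑ a : Fin n, (if (a : ℕ) ≤ (i : ℕ) then (1 : ℝ) else -1) * (e₁ a ω * s (i - a) ω)) P := by
      rw [show (fun ω => t * (∑ a : Fin n, (if (a : ℕ) ≤ (i : ℕ) then (1 : ℝ) else -1) * (e₁ a ω * s (i - a) ω))) = t • (fun ω => ∑ a : Fin n, (if (a : ℕ) ≤ (i : ℕ) then (1 : ℝ) else -1) * (e₁ a ω * s (i - a) ω)) from rfl]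
      exact variance_smul t _ P
    have vW : variance (fun ω => t * e₀ i ω) P = t ^ 2 * variance (e₀ i) P := by
      rw [show (fun ω => t * e₀ i ω) = t • (e₀ i) from rfl]
      exact variance_smul t _ P
    rw [vA, vB, vW, hmvar i, hAvar, hBvar, he₀var i]
    ring
  · intro k _
    fin_cases k
    · exact hmi2
    · exact htA2
    · exact htB2
    · exact htW2
  · intro k hk l hl hkl
    fin_cases k <;> fin_cases l <;>
      first
        | exact absurd rfl hkl
        | exact I01 | exact I02 | exact I03 | exact I12 | exact I13 | exact I23
        | exact I01.symm | exact I02.symm | exact I03.symm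
        | exact I12.symm | exact I13.symm | exact I23.symm
end

section
/- (Noise variance added by GHS key switching with Q = q².) Let n ≥ 1 and let q > 0, t > 0 be real numbers, and V_e, V_s > 0. Let c_2, e, d_0, d_1, s be mutually independent random polynomials in R_n with independent identically distributed mean-zero coefficients of variances q²/12, V_e, t²q²/12, t²q²/12, and V_s respectively. Then for every 0 ≤ i ≤ n−1, Var( ( (1/q)·( t·c_2·e + d_0 + d_1·s ) )|_i ) = (t²/12) · ( n·V_e + 1 + n·V_s ), products computed in R_n. -/
open MeasureTheory ProbabilityTheory Polynomial
open scoped NNReal ENNReal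

lemma gMonic {n : ℕ} (hn : 1 ≤ n) : (Polynomial.X ^ n + 1 : Polynomial ℝ).Monic := by
  apply Polynomial.monic_X_pow_add
  rw [Polynomial.degree_one]
  exact_mod_cast Nat.lt_of_lt_of_le Nat.zero_lt_one hn

lemma gDeg {n : ℕ} (hn : 1 ≤ n) : (Polynomial.X ^ n + 1 : Polynomial ℝ).degree = n := by
  rw [← Polynomial.C_1]
  exact Polynomial.degree_X_pow_add_C hn 1

lemma degree_polyOf_lt (n : ℕ) (c : Fin n → ℝ) : (polyOf n c).degree < (n : WithBot ℕ) ∨ n = 0 := by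
  rcases Nat.eq_zero_or_pos n with h | h
  · right; exact h
  left
  refine lt_of_le_of_lt (Polynomial.degree_sum_le _ _) ?_
  rw [Finset.sup_lt_iff (by exact_mod_cast WithBot.bot_lt_coe n)]
  intro j _
  refine lt_of_le_of_lt (Polynomial.degree_C_mul_X_pow_le _ _) ?_
  exact_mod_cast j.isLt

lemma degree_polyOf_lt' {n : ℕ} (hn : 1 ≤ n) (c : Fin n → ℝ) :
    (polyOf n c).degree < (Polynomial.X ^ n + 1 : Polynomial ℝ).degree := by
  rw [gDeg hn]
  rcases degree_polyOf_lt n c with h | h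
  · exact h
  · omega

lemma modPolyOf {n : ℕ} (hn : 1 ≤ n) (c : Fin n → ℝ) :
    polyOf n c %ₘ (Polynomial.X ^ n + 1) = polyOf n c :=
  (Polynomial.modByMonic_eq_self_iff (gMonic hn)).2 (degree_polyOf_lt' hn c)

lemma coeff_polyOf {n : ℕ} (c : Fin n → ℝ) (i : Fin n) :
    (polyOf n c).coeff (i : ℕ) = c i := by
  rw [polyOf, Polynomial.finset_sum_coeff]
  rw [Finset.sum_eq_single i]
  · simp
  · intro j _ hj
    have : (i : ℕ) ≠ (j : ℕ) := fun h => hj (Fin.ext h.symm)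
    simp [Polynomial.coeff_C_mul, Polynomial.coeff_X_pow, this]
  · simp

lemma redCoeff_polyOf {n : ℕ} (hn : 1 ≤ n) (c : Fin n → ℝ) (i : Fin n) :
    redCoeff n (polyOf n c) (i : ℕ) = c i := by
  rw [redCoeff, modPolyOf hn, coeff_polyOf]

lemma redCoeff_add {n : ℕ} (p r : Polynomial ℝ) (i : ℕ) :
    redCoeff n (p + r) i = redCoeff n p i + redCoeff n r i := by
  simp [redCoeff, Polynomial.add_modByMonic]

lemma redCoeff_Cmul {n : ℕ} (a : ℝ) (p : Polynomial ℝ) (i : ℕ) :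
    redCoeff n (Polynomial.C a * p) i = a * redCoeff n p i := by
  rw [← Polynomial.smul_eq_C_mul]
  simp [redCoeff, Polynomial.smul_modByMonic, Polynomial.coeff_smul, smul_eq_mul]

lemma redCoeff_sum {n : ℕ} {α : Type*} (sfin : Finset α) (f : α → Polynomial ℝ) (i : ℕ) :
    redCoeff n (∑ x ∈ sfin, f x) i = ∑ x ∈ sfin, redCoeff n (f x) i := by
  classical
  induction sfin using Finset.induction with
  | empty => simp [redCoeff]
  | insert _ _ h ih => rw [Finset.sum_insert h, Finset.sum_insert h, redCoeff_add, ih]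

lemma redCoeff_monomial_lo {n : ℕ} (hn : 1 ≤ n) (a : ℝ) (m : ℕ) (hm : m < n) (i : Fin n) :
    redCoeff n (Polynomial.C a * Polynomial.X ^ m) (i : ℕ)
      = if (i : ℕ) = m then a else 0 := by
  have hdeg : (Polynomial.C a * Polynomial.X ^ m : Polynomial ℝ).degree
      < (Polynomial.X ^ n + 1 : Polynomial ℝ).degree := by
    rw [gDeg hn]
    exact lt_of_le_of_lt (Polynomial.degree_C_mul_X_pow_le _ _) (by exact_mod_cast hm)
  rw [redCoeff, (Polynomial.modByMonic_eq_self_iff (gMonic hn)).2 hdeg,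
    Polynomial.coeff_C_mul, Polynomial.coeff_X_pow]
  simp [mul_comm]

lemma redCoeff_monomial_hi {n : ℕ} (hn : 1 ≤ n) (a : ℝ) (m : ℕ) (hm1 : n ≤ m) (hm2 : m < 2 * n)
    (i : Fin n) :
    redCoeff n (Polynomial.C a * Polynomial.X ^ m) (i : ℕ)
      = if (i : ℕ) + n = m then -a else 0 := by
  set r := m - n with hr
  have hrn : r < n := by omega
  have hmod : (Polynomial.C a * Polynomial.X ^ m) %ₘ (Polynomial.X ^ n + 1)
      = (-(Polynomial.C a * Polynomial.X ^ r)) %ₘ (Polynomial.X ^ n + 1) := by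
    apply Polynomial.modByMonic_eq_of_dvd_sub (gMonic hn)
    refine ⟨Polynomial.C a * Polynomial.X ^ r, ?_⟩
    have : r + n = m := by omega
    rw [← this]
    ring
  have hdeg : (-(Polynomial.C a * Polynomial.X ^ r) : Polynomial ℝ).degree
      < (Polynomial.X ^ n + 1 : Polynomial ℝ).degree := by
    rw [gDeg hn, Polynomial.degree_neg]
    exact lt_of_le_of_lt (Polynomial.degree_C_mul_X_pow_le _ _) (by exact_mod_cast hrn)
  rw [redCoeff, hmod, (Polynomial.modByMonic_eq_self_iff (gMonic hn)).2 hdeg,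
    Polynomial.coeff_neg, Polynomial.coeff_C_mul, Polynomial.coeff_X_pow]
  have : ((i : ℕ) = r) ↔ ((i : ℕ) + n = m) := by omega
  by_cases h : (i : ℕ) = r
  · rw [if_pos h, if_pos (this.mp h)]; ring
  · rw [if_neg h, if_neg (fun hc => h (this.mpr hc))]; ring

lemma polyOf_mul {n : ℕ} (c e : Fin n → ℝ) :
    polyOf n c * polyOf n e
      = ∑ j : Fin n, ∑ k : Fin n,
          Polynomial.C (c j * e k) * Polynomial.X ^ ((j : ℕ) + (k : ℕ)) := by
  rw [polyOf, polyOf, Finset.sum_mul_sum]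
  congr 1; funext j; congr 1; funext k
  rw [Polynomial.C_mul, pow_add]
  ring

lemma fin_sub_iff {n : ℕ} (hn : 1 ≤ n) (i j k : Fin n) :
    k = i - j ↔ ((j : ℕ) + (k : ℕ) = (i : ℕ) ∨ (j : ℕ) + (k : ℕ) = (i : ℕ) + n) := by
  haveI : NeZero n := ⟨by omega⟩
  constructor
  · intro h
    subst h
    have hv : ((j + (i - j) : Fin n) : ℕ) = ((j : ℕ) + ((i - j : Fin n) : ℕ)) % n :=
      Fin.val_add _ _
    rw [show j + (i - j) = i from add_sub_cancel j i] at hv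
    rcases lt_or_ge ((j : ℕ) + ((i - j : Fin n) : ℕ)) n with hlt | hge
    · left; rw [Nat.mod_eq_of_lt hlt] at hv; omega
    · right
      have h2 : (j : ℕ) + ((i - j : Fin n) : ℕ) - n < n := by
        have := j.isLt; have := (i - j : Fin n).isLt; omega
      rw [Nat.mod_eq_sub_mod hge, Nat.mod_eq_of_lt h2] at hv
      omega
  · intro h
    have : j + k = i := by
      apply Fin.ext
      rw [Fin.val_add]
      rcases h with h | h
      · rw [Nat.mod_eq_of_lt (by omega)]; omega
      · have hj := j.isLt; have hk := k.isLt; have hi := i.isLt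
        rw [Nat.mod_eq_sub_mod (by omega), Nat.mod_eq_of_lt (by omega)]
        omega
    rw [← this]
    exact (add_sub_cancel_left j k).symm

lemma redCoeff_mul {n : ℕ} (hn : 1 ≤ n) (c e : Fin n → ℝ) (i : Fin n) :
    redCoeff n (polyOf n c * polyOf n e) (i : ℕ)
      = ∑ j : Fin n, (if (j : ℕ) ≤ (i : ℕ) then (1 : ℝ) else -1) * (c j * e (i - j)) := by
  haveI : NeZero n := ⟨by omega⟩
  rw [polyOf_mul, redCoeff_sum]
  refine Finset.sum_congr rfl fun j _ => ?_
  rw [redCoeff_sum, Finset.sum_eq_single (i - j)]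
  · have hcase := (fin_sub_iff hn i j (i - j)).mp rfl
    have hklt := (i - j : Fin n).isLt
    have hjlt := j.isLt
    have hilt := i.isLt
    rcases le_or_gt (j : ℕ) (i : ℕ) with hji | hji
    · have h1 : (j : ℕ) + ((i - j : Fin n) : ℕ) = (i : ℕ) := by
        rcases hcase with h | h
        · exact h
        · omega
      rw [redCoeff_monomial_lo hn _ _ (by omega) i, if_pos (by omega), if_pos hji, one_mul]
    · have h1 : (j : ℕ) + ((i - j : Fin n) : ℕ) = (i : ℕ) + n := by
        rcases hcase with h | h
        · omega
        · exact h
      rw [redCoeff_monomial_hi hn _ _ (by omega) (by omega) i, if_pos (by omega),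
        if_neg (by omega)]
      ring
  · intro k _ hk
    have hnd := fun h => hk ((fin_sub_iff hn i j k).mpr h)
    have h1 : (j : ℕ) + (k : ℕ) ≠ (i : ℕ) := fun h => hnd (Or.inl h)
    have h2 : (j : ℕ) + (k : ℕ) ≠ (i : ℕ) + n := fun h => hnd (Or.inr h)
    have hjlt := j.isLt; have hklt := k.isLt
    rcases lt_or_ge ((j : ℕ) + (k : ℕ)) n with hm | hm
    · rw [redCoeff_monomial_lo hn _ _ hm i, if_neg (by omega)]
    · rw [redCoeff_monomial_hi hn _ _ hm (by omega) i, if_neg (by omega)]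
  · intro h
    exact absurd (Finset.mem_univ _) h

lemma prodMemL2 {Ω : Type*} [MeasurableSpace Ω] {P : Measure Ω} [IsProbabilityMeasure P]
    {u v : Ω → ℝ} (hum : Measurable u) (hvm : Measurable v)
    (huv : IndepFun u v P) (huL2 : MemLp u 2 P) (hvL2 : MemLp v 2 P) :
    MemLp (fun ω => u ω * v ω) 2 P := by
  rw [memLp_two_iff_integrable_sq (f := fun ω => u ω * v ω) (hum.mul hvm).aestronglyMeasurable]
  have h2 : (fun ω => (u ω * v ω) ^ 2) = fun ω => (u ω ^ 2) * (v ω ^ 2) := by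
    funext ω; ring
  rw [h2]
  have hsqindep : IndepFun (fun ω => u ω ^ 2) (fun ω => v ω ^ 2) P :=
    huv.comp (measurable_id.pow_const 2) (measurable_id.pow_const 2)
  exact hsqindep.integrable_mul huL2.integrable_sq hvL2.integrable_sq

lemma varSum {Ω : Type*} [MeasurableSpace Ω] (P : Measure Ω) [IsProbabilityMeasure P]
    {n : ℕ} (u v : Fin n → Ω → ℝ)
    (hum : ∀ j, Measurable (u j)) (hvm : ∀ j, Measurable (v j))
    (huI : iIndepFun u P)
    (hvI : iIndepFun v P)
    (huv : IndepFun (fun ω j => u j ω) (fun ω j => v j ω) P)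
    (humean : ∀ j, (∫ ω, u j ω ∂P) = 0) (hvmean : ∀ j, (∫ ω, v j ω ∂P) = 0)
    (huL2 : ∀ j, MemLp (u j) 2 P) (hvL2 : ∀ j, MemLp (v j) 2 P)
    (Vu Vv : ℝ) (huvar : ∀ j, variance (u j) P = Vu) (hvvar : ∀ j, variance (v j) P = Vv)
    (ε : Fin n → ℝ) (hε : ∀ j, ε j = 1 ∨ ε j = -1) (σ : Fin n → Fin n) :
    MemLp (fun ω => ∑ j, ε j * (u j ω * v (σ j) ω)) 2 P ∧
    (∫ ω, ∑ j, ε j * (u j ω * v (σ j) ω) ∂P) = 0 ∧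
    variance (fun ω => ∑ j, ε j * (u j ω * v (σ j) ω)) P = n * (Vu * Vv) := by
  have hpair : ∀ j k, IndepFun (u j) (v k) P := fun j k =>
    huv.comp (measurable_pi_apply j) (measurable_pi_apply k)
  have hprod2 : ∀ j k, MemLp (fun ω => u j ω * v k ω) 2 P := fun j k =>
    prodMemL2 (hum j) (hvm k) (hpair j k) (huL2 j) (hvL2 k)
  have hterm2 : ∀ j, MemLp (fun ω => ε j * (u j ω * v (σ j) ω)) 2 P := fun j =>
    (hprod2 j (σ j)).const_mul _
  have hX2 : MemLp (fun ω => ∑ j, ε j * (u j ω * v (σ j) ω)) 2 P :=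
    memLp_finset_sum Finset.univ (fun j _ => hterm2 j)
  have hEprod : ∀ j k, (∫ ω, u j ω * v k ω ∂P) = (∫ ω, u j ω ∂P) * (∫ ω, v k ω ∂P) :=
    fun j k => (hpair j k).integral_mul_eq_mul_integral
      ((huL2 j).integrable one_le_two).aestronglyMeasurable ((hvL2 k).integrable one_le_two).aestronglyMeasurable
  have hmean0 : (∫ ω, ∑ j, ε j * (u j ω * v (σ j) ω) ∂P) = 0 := by
    rw [integral_finset_sum _ (fun j _ => ((hprod2 j (σ j)).integrable one_le_two).const_mul _)]
    refine Finset.sum_eq_zero fun j _ => ?_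
    rw [integral_const_mul, hEprod, humean j, zero_mul, mul_zero]
  refine ⟨hX2, hmean0, ?_⟩
  -- integrability of pair products
  have huu : ∀ j k, Integrable (fun ω => u j ω * u k ω) P := by
    intro j k
    by_cases h : j = k
    · subst h
      have := (huL2 j).integrable_sq
      have heq : (fun ω => u j ω * u j ω) = fun ω => u j ω ^ 2 := by
        funext ω; ring
      rwa [heq]
    · exact (huI.indepFun h).integrable_mul
        ((huL2 j).integrable one_le_two) ((huL2 k).integrable one_le_two)
  have hvv : ∀ j k, Integrable (fun ω => v j ω * v k ω) P := by
    intro j k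
    by_cases h : j = k
    · subst h
      have := (hvL2 j).integrable_sq
      have heq : (fun ω => v j ω * v j ω) = fun ω => v j ω ^ 2 := by
        funext ω; ring
      rwa [heq]
    · exact (hvI.indepFun h).integrable_mul
        ((hvL2 j).integrable one_le_two) ((hvL2 k).integrable one_le_two)
  have hblock : ∀ j k a b, IndepFun (fun ω => u j ω * u k ω) (fun ω => v a ω * v b ω) P :=
    fun j k a b => huv.comp ((measurable_pi_apply j).mul (measurable_pi_apply k))
      ((measurable_pi_apply a).mul (measurable_pi_apply b))
  have hint4 : ∀ j k a b, Integrable (fun ω => (u j ω * u k ω) * (v a ω * v b ω)) P :=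
    fun j k a b => (hblock j k a b).integrable_mul (huu j k) (hvv a b)
  have hE4 : ∀ j k a b, (∫ ω, (u j ω * u k ω) * (v a ω * v b ω) ∂P)
      = (∫ ω, u j ω * u k ω ∂P) * (∫ ω, v a ω * v b ω ∂P) :=
    fun j k a b => (hblock j k a b).integral_mul_eq_mul_integral (huu j k).aestronglyMeasurable (hvv a b).aestronglyMeasurable
  have hEuu : ∀ j k, j ≠ k → (∫ ω, u j ω * u k ω ∂P) = 0 := by
    intro j k h
    have h0 : (∫ ω, u j ω * u k ω ∂P) = (∫ ω, u j ω ∂P) * (∫ ω, u k ω ∂P) :=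
      (huI.indepFun h).integral_mul_eq_mul_integral
        ((huL2 j).integrable one_le_two).aestronglyMeasurable ((huL2 k).integrable one_le_two).aestronglyMeasurable
    rw [h0, humean j, zero_mul]
  have hEusq : ∀ j, (∫ ω, u j ω * u j ω ∂P) = Vu := by
    intro j
    have hv := variance_eq_sub (huL2 j)
    have h1 : (∫ ω, u j ω ∂P) = 0 := humean j
    have h2 : (∫ ω, (u j ω) ^ 2 ∂P) = ∫ ω, u j ω * u j ω ∂P := by
      apply integral_congr_ae; filter_upwards with ω; rw [pow_two]
    have h4 : variance (u j) P = (∫ ω, (u j ω) ^ 2 ∂P) - (∫ ω, u j ω ∂P) ^ 2 := hv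
    rw [huvar j, h2, h1] at h4
    linarith [h4]
  have hEvsq : ∀ j, (∫ ω, v j ω * v j ω ∂P) = Vv := by
    intro j
    have hv := variance_eq_sub (hvL2 j)
    have h1 : (∫ ω, v j ω ∂P) = 0 := hvmean j
    have h2 : (∫ ω, (v j ω) ^ 2 ∂P) = ∫ ω, v j ω * v j ω ∂P := by
      apply integral_congr_ae; filter_upwards with ω; rw [pow_two]
    have h4 : variance (v j) P = (∫ ω, (v j ω) ^ 2 ∂P) - (∫ ω, v j ω ∂P) ^ 2 := hv
    rw [hvvar j, h2, h1] at h4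
    linarith [h4]
  set S : Ω → ℝ := fun ω => ∑ j, ε j * (u j ω * v (σ j) ω) with hSdef
  have hvd : variance S P = (∫ ω, (S ω) ^ 2 ∂P) - (∫ ω, S ω ∂P) ^ 2 := by
    have := variance_eq_sub hX2
    exact this
  rw [hvd]
  have hPX : (∫ ω, S ω ∂P) = (0 : ℝ) := hmean0
  have hrw : ∀ ω : Ω, (S ω) ^ 2
      = ∑ j, ∑ k, (ε j * ε k) * ((u j ω * u k ω) * (v (σ j) ω * v (σ k) ω)) := by
    intro ω
    rw [hSdef, pow_two, Finset.sum_mul_sum]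
    exact Finset.sum_congr rfl fun j _ => Finset.sum_congr rfl fun k _ => by ring
  have hintsum : (∫ ω, (S ω) ^ 2 ∂P)
      = ∑ j, ∑ k, (ε j * ε k) * ((∫ ω, u j ω * u k ω ∂P) * (∫ ω, v (σ j) ω * v (σ k) ω ∂P)) := by
    have h1 : (∫ ω, (S ω) ^ 2 ∂P) = ∫ ω, ∑ j, ∑ k,
        (ε j * ε k) * ((u j ω * u k ω) * (v (σ j) ω * v (σ k) ω)) ∂P := by
      apply integral_congr_ae
      filter_upwards with ω
      exact hrw ω
    rw [h1, integral_finset_sum _ (fun j _ => integrable_finset_sum _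
      (fun k _ => (hint4 j k (σ j) (σ k)).const_mul _))]
    refine Finset.sum_congr rfl fun j _ => ?_
    rw [integral_finset_sum _ (fun k _ => (hint4 j k (σ j) (σ k)).const_mul _)]
    refine Finset.sum_congr rfl fun k _ => ?_
    rw [integral_const_mul, hE4]
  rw [hintsum, hPX]
  have hdiag : ∀ j : Fin n, ∑ k, (ε j * ε k) *
      ((∫ ω, u j ω * u k ω ∂P) * (∫ ω, v (σ j) ω * v (σ k) ω ∂P)) = Vu * Vv := by
    intro j
    rw [Finset.sum_eq_single j]
    · rw [hEusq j, hEvsq (σ j)]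
      rcases hε j with h | h <;> rw [h] <;> ring
    · intro k _ hk
      rw [hEuu j k (fun h => hk h.symm), zero_mul, mul_zero]
    · intro h; exact absurd (Finset.mem_univ _) h
  rw [Finset.sum_congr rfl (fun j _ => hdiag j), Finset.sum_const, Finset.card_univ,
    Fintype.card_fin, nsmul_eq_mul]
  ring

/-- **noise variance added by GHS key switching with `Q = q²`.**
With `c₂, e, d₀, d₁, s` mutually independent random polynomials in `R_n` having
i.i.d. mean-zero coefficients of variances `q²/12, V_e, t²q²/12, t²q²/12, V_s`,
`Var(((1/q)·(t·c₂·e + d₀ + d₁·s))|_i) = (t²/12)·(n·V_e + 1 + n·V_s)`. -/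
theorem stmt16 {Ω : Type*} [MeasurableSpace Ω] (P : Measure Ω) [IsProbabilityMeasure P]
    (n : ℕ) (hn : 1 ≤ n) (q t : ℝ) (hq : 0 < q) (ht : 0 < t)
    (Ve Vs : ℝ) (hVe : 0 < Ve) (hVs : 0 < Vs)
    (c₂ e d₀ d₁ s : Fin n → Ω → ℝ)
    (hmeas : ∀ f ∈ [c₂, e, d₀, d₁, s], ∀ j, Measurable (f j))
    -- the five random polynomials are mutually independent
    (hindep : iIndepFun
      (![fun ω (j : Fin n) => c₂ j ω, fun ω j => e j ω, fun ω j => d₀ j ω,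
         fun ω j => d₁ j ω, fun ω j => s j ω] : Fin 5 → Ω → Fin n → ℝ) P)
    -- each has independent identically distributed mean-zero square-integrable
    -- coefficients
    (hiid : ∀ f ∈ [c₂, e, d₀, d₁, s],
      iIndepFun f P ∧
      (∀ j j', Measure.map (f j) P = Measure.map (f j') P) ∧
      (∀ j, (∫ ω, f j ω ∂P) = 0) ∧ (∀ j, MemLp (f j) 2 P))
    -- prescribed coefficient variances
    (hc₂var : ∀ j, variance (c₂ j) P = q ^ 2 / 12)
    (hevar : ∀ j, variance (e j) P = Ve)
    (hd₀var : ∀ j, variance (d₀ j) P = t ^ 2 * q ^ 2 / 12)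
    (hd₁var : ∀ j, variance (d₁ j) P = t ^ 2 * q ^ 2 / 12)
    (hsvar : ∀ j, variance (s j) P = Vs)
    (i : Fin n) :
    variance (fun ω => redCoeff n
        (Polynomial.C (1 / q) *
          (Polynomial.C t * (polyOf n (fun j => c₂ j ω) * polyOf n (fun j => e j ω))
            + polyOf n (fun j => d₀ j ω)
            + polyOf n (fun j => d₁ j ω) * polyOf n (fun j => s j ω))) i) P
      = (t ^ 2 / 12) * (n * Ve + 1 + n * Vs) := by
  haveI : NeZero n := ⟨by omega⟩
  obtain ⟨hc₂I, -, hc₂mean, hc₂L2⟩ := hiid c₂ (by simp)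
  obtain ⟨heI, -, hemean, heL2⟩ := hiid e (by simp)
  obtain ⟨hd₀I, -, hd₀mean, hd₀L2⟩ := hiid d₀ (by simp)
  obtain ⟨hd₁I, -, hd₁mean, hd₁L2⟩ := hiid d₁ (by simp)
  obtain ⟨hsI, -, hsmean, hsL2⟩ := hiid s (by simp)
  have hmc₂ : ∀ j, Measurable (c₂ j) := hmeas c₂ (by simp)
  have hme : ∀ j, Measurable (e j) := hmeas e (by simp)
  have hmd₀ : ∀ j, Measurable (d₀ j) := hmeas d₀ (by simp)
  have hmd₁ : ∀ j, Measurable (d₁ j) := hmeas d₁ (by simp)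
  have hms : ∀ j, Measurable (s j) := hmeas s (by simp)
  set M : Fin 5 → Ω → Fin n → ℝ :=
    (![fun ω (j : Fin n) => c₂ j ω, fun ω j => e j ω, fun ω j => d₀ j ω,
       fun ω j => d₁ j ω, fun ω j => s j ω]) with hMdef
  have hMmeas : ∀ k : Fin 5, Measurable (M k) := by
    intro k
    fin_cases k
    · exact measurable_pi_lambda _ (fun j => hmc₂ j)
    · exact measurable_pi_lambda _ (fun j => hme j)
    · exact measurable_pi_lambda _ (fun j => hmd₀ j)
    · exact measurable_pi_lambda _ (fun j => hmd₁ j)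
    · exact measurable_pi_lambda _ (fun j => hms j)
  have huv1 : IndepFun (fun ω j => c₂ j ω) (fun ω j => e j ω) P :=
    hindep.indepFun (show (0 : Fin 5) ≠ 1 by decide)
  have huv2 : IndepFun (fun ω j => d₁ j ω) (fun ω j => s j ω) P :=
    hindep.indepFun (show (3 : Fin 5) ≠ 4 by decide)
  have hεpm : ∀ j : Fin n, (if (j : ℕ) ≤ (i : ℕ) then (1 : ℝ) else -1) = 1 ∨
      (if (j : ℕ) ≤ (i : ℕ) then (1 : ℝ) else -1) = -1 := by
    intro j
    by_cases h : (j : ℕ) ≤ (i : ℕ) <;> simp [h]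
  set X : Ω → ℝ :=
    fun ω => ∑ j : Fin n, (if (j : ℕ) ≤ (i : ℕ) then (1 : ℝ) else -1) * (c₂ j ω * e (i - j) ω)
    with hXdef
  set Z : Ω → ℝ :=
    fun ω => ∑ j : Fin n, (if (j : ℕ) ≤ (i : ℕ) then (1 : ℝ) else -1) * (d₁ j ω * s (i - j) ω)
    with hZdef
  obtain ⟨hXL2, hXmean, hXvar⟩ :=
    varSum P c₂ e hmc₂ hme hc₂I heI huv1 hc₂mean hemean hc₂L2 heL2
      (q ^ 2 / 12) Ve hc₂var hevar
      (fun j => if (j : ℕ) ≤ (i : ℕ) then (1 : ℝ) else -1) hεpm (fun j => i - j)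
  obtain ⟨hZL2, hZmean, hZvar⟩ :=
    varSum P d₁ s hmd₁ hms hd₁I hsI huv2 hd₁mean hsmean hd₁L2 hsL2
      (t ^ 2 * q ^ 2 / 12) Vs hd₁var hsvar
      (fun j => if (j : ℕ) ≤ (i : ℕ) then (1 : ℝ) else -1) hεpm (fun j => i - j)
  have hXL2' : MemLp X 2 P := hXL2
  have hXvar' : variance X P = n * ((q ^ 2 / 12) * Ve) := hXvar
  have hZL2' : MemLp Z 2 P := hZL2
  have hZvar' : variance Z P = n * ((t ^ 2 * q ^ 2 / 12) * Vs) := hZvar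
  -- rewrite the random variable
  have hfun : (fun ω => redCoeff n
        (Polynomial.C (1 / q) *
          (Polynomial.C t * (polyOf n (fun j => c₂ j ω) * polyOf n (fun j => e j ω))
            + polyOf n (fun j => d₀ j ω)
            + polyOf n (fun j => d₁ j ω) * polyOf n (fun j => s j ω))) (i : ℕ))
      = fun ω => (1 / q) * ((t * X ω + d₀ i ω) + Z ω) := by
    funext ω
    rw [redCoeff_Cmul, redCoeff_add, redCoeff_add, redCoeff_Cmul,
      redCoeff_mul hn, redCoeff_mul hn, redCoeff_polyOf hn]
  rw [hfun, variance_const_mul]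
  -- independence for the variance additions
  have hfin1 := hindep.indepFun_finset {0, 1} {2, 3, 4} (by decide) hMmeas
  have hφm : Measurable (fun g : ({0, 1} : Finset (Fin 5)) → (Fin n → ℝ) =>
      t * ∑ j : Fin n, (if (j : ℕ) ≤ (i : ℕ) then (1 : ℝ) else -1) *
        (g ⟨0, by decide⟩ j * g ⟨1, by decide⟩ (i - j))) := by
    have h0 : Measurable (fun g : ({0, 1} : Finset (Fin 5)) → (Fin n → ℝ) =>
        g ⟨0, by decide⟩) := measurable_pi_apply _
    have h1 : Measurable (fun g : ({0, 1} : Finset (Fin 5)) → (Fin n → ℝ) =>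
        g ⟨1, by decide⟩) := measurable_pi_apply _
    apply Measurable.const_mul
    apply Finset.measurable_sum
    intro j _
    exact (((measurable_pi_apply j).comp h0).mul
      ((measurable_pi_apply (i - j)).comp h1)).const_mul _
  have hψm : Measurable (fun g : ({2, 3, 4} : Finset (Fin 5)) → (Fin n → ℝ) =>
      g ⟨2, by decide⟩ i + ∑ j : Fin n, (if (j : ℕ) ≤ (i : ℕ) then (1 : ℝ) else -1) *
        (g ⟨3, by decide⟩ j * g ⟨4, by decide⟩ (i - j))) := by
    have h2 : Measurable (fun g : ({2, 3, 4} : Finset (Fin 5)) → (Fin n → ℝ) =>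
        g ⟨2, by decide⟩) := measurable_pi_apply _
    have h3 : Measurable (fun g : ({2, 3, 4} : Finset (Fin 5)) → (Fin n → ℝ) =>
        g ⟨3, by decide⟩) := measurable_pi_apply _
    have h4 : Measurable (fun g : ({2, 3, 4} : Finset (Fin 5)) → (Fin n → ℝ) =>
        g ⟨4, by decide⟩) := measurable_pi_apply _
    apply Measurable.add
    · exact (measurable_pi_apply i).comp h2
    · apply Finset.measurable_sum
      intro j _
      exact (((measurable_pi_apply j).comp h3).mul
        ((measurable_pi_apply (i - j)).comp h4)).const_mul _
  have hIndAB : IndepFun (fun ω => t * X ω) (fun ω => d₀ i ω + Z ω) P :=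
    hfin1.comp hφm hψm
  have hfin2 := hindep.indepFun_finset {2} {3, 4} (by decide) hMmeas
  have hφ2m : Measurable (fun g : ({2} : Finset (Fin 5)) → (Fin n → ℝ) =>
      g ⟨2, by decide⟩ i) := by
    have h2 : Measurable (fun g : ({2} : Finset (Fin 5)) → (Fin n → ℝ) =>
        g ⟨2, by decide⟩) := measurable_pi_apply _
    exact (measurable_pi_apply i).comp h2
  have hψ2m : Measurable (fun g : ({3, 4} : Finset (Fin 5)) → (Fin n → ℝ) =>
      ∑ j : Fin n, (if (j : ℕ) ≤ (i : ℕ) then (1 : ℝ) else -1) *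
        (g ⟨3, by decide⟩ j * g ⟨4, by decide⟩ (i - j))) := by
    have h3 : Measurable (fun g : ({3, 4} : Finset (Fin 5)) → (Fin n → ℝ) =>
        g ⟨3, by decide⟩) := measurable_pi_apply _
    have h4 : Measurable (fun g : ({3, 4} : Finset (Fin 5)) → (Fin n → ℝ) =>
        g ⟨4, by decide⟩) := measurable_pi_apply _
    apply Finset.measurable_sum
    intro j _
    exact (((measurable_pi_apply j).comp h3).mul
      ((measurable_pi_apply (i - j)).comp h4)).const_mul _
  have hIndBC : IndepFun (d₀ i) Z P := hfin2.comp hφ2m hψ2m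
  have hA2 : MemLp (fun ω => t * X ω) 2 P := hXL2'.const_mul t
  have hBC2 : MemLp (fun ω => d₀ i ω + Z ω) 2 P := (hd₀L2 i).add hZL2'
  have hsplit1 : variance (fun ω => (t * X ω + d₀ i ω) + Z ω) P
      = variance (fun ω => t * X ω) P + variance (fun ω => d₀ i ω + Z ω) P := by
    have hregroup : (fun ω => (t * X ω + d₀ i ω) + Z ω)
        = fun ω => t * X ω + (d₀ i ω + Z ω) := by
      funext ω; ring
    rw [hregroup]
    exact IndepFun.variance_add hA2 hBC2 hIndAB
  have hsplit2 : variance (fun ω => d₀ i ω + Z ω) P = variance (d₀ i) P + variance Z P :=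
    IndepFun.variance_add (hd₀L2 i) hZL2' hIndBC
  rw [hsplit1, hsplit2, variance_const_mul t X, hXvar', hZvar', hd₀var i]
  have hq' : q ≠ 0 := ne_of_gt hq
  field_simp
  ring
end
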